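/- Let μ be a real number. Then for all x ∈ (0,∞), the operator A³ applied to the function x ↦ x^μ satisfies (A³ (·^μ))(x) = d³⁺⁺(μ) x^{μ+2} + d³⁺(μ) x^{μ+1} + d³⁰(μ) x^{μ} + d³⁻(μ) x^{μ−1}. -/
import Mathlib

noncomputable def qp (q r : ℝ) : ℂ := ((q ^ r : ℝ) : ℂ)

lemma qp_add {q : ℝ} (hq : 0 < q) (a b : ℝ) : qp q (a + b) = qp q a * qp q b := by
  simp [qp, Real.rpow_add hq]

lemma qp_neg {q : ℝ} (hq : 0 < q) (a : ℝ) : qp q (-a) = (qp q a)⁻¹ := by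
  simp [qp, Real.rpow_neg hq.le]

lemma qp_ne_zero {q : ℝ} (hq : 0 < q) (a : ℝ) : qp q a ≠ 0 := by
  simp [qp, (Real.rpow_pos_of_pos hq a).ne']

noncomputable def A3 (q h1 h2 h3 l1 l2 l3 b : ℝ) (t1 t2 t3 : ℂ) (g : ℝ → ℂ) (x : ℝ) : ℂ :=
  (x : ℂ)⁻¹ * ((x : ℂ) - qp q (h1 + 1/2) * t1) * ((x : ℂ) - qp q (h2 + 1/2) * t2)
      * ((x : ℂ) - qp q (h3 + 1/2) * t3) * g (x / q)
    + (x : ℂ)⁻¹ * ((x : ℂ) - qp q (l1 - 1/2) * t1) * ((x : ℂ) - qp q (l2 - 1/2) * t2)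
      * ((x : ℂ) - qp q (l3 - 1/2) * t3) * g (q * x)
    + (-(qp q (1/2) + qp q (-(1/2))) * (x : ℂ) ^ 2
        + ((qp q h1 + qp q l1) * t1 + (qp q h2 + qp q l2) * t2 + (qp q h3 + qp q l3) * t3) * (x : ℂ)
        + qp q ((h1 + h2 + h3 + l1 + l2 + l3) / 2) * (qp q (b / 2) + qp q (-b / 2))
          * t1 * t2 * t3 * (x : ℂ)⁻¹) * g x

noncomputable def d3pp (q μ : ℝ) : ℂ :=
  qp q (-μ) + qp q μ - qp q (1/2) - qp q (-(1/2))

noncomputable def d3p (q h1 h2 h3 l1 l2 l3 : ℝ) (t1 t2 t3 : ℂ) (μ : ℝ) : ℂ :=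
  (qp q h1 + qp q l1 - qp q (h1 + 1/2 - μ) - qp q (l1 - 1/2 + μ)) * t1
    + (qp q h2 + qp q l2 - qp q (h2 + 1/2 - μ) - qp q (l2 - 1/2 + μ)) * t2
    + (qp q h3 + qp q l3 - qp q (h3 + 1/2 - μ) - qp q (l3 - 1/2 + μ)) * t3

noncomputable def d3z (q h1 h2 h3 l1 l2 l3 : ℝ) (t1 t2 t3 : ℂ) (μ : ℝ) : ℂ :=
  (qp q (h1 + h2 + 1 - μ) + qp q (l1 + l2 - 1 + μ)) * t1 * t2
    + (qp q (h1 + h3 + 1 - μ) + qp q (l1 + l3 - 1 + μ)) * t1 * t3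
    + (qp q (h2 + h3 + 1 - μ) + qp q (l2 + l3 - 1 + μ)) * t2 * t3

noncomputable def d3m (q h1 h2 h3 l1 l2 l3 b : ℝ) (t1 t2 t3 : ℂ) (μ : ℝ) : ℂ :=
  (-qp q (h1 + h2 + h3 + 3/2 - μ) - qp q (l1 + l2 + l3 - 3/2 + μ)
      + qp q ((h1 + h2 + h3 + l1 + l2 + l3) / 2) * (qp q (b / 2) + qp q (-b / 2))) * t1 * t2 * t3

set_option maxHeartbeats 1000000 in
theorem stmt3 (q h1 h2 h3 l1 l2 l3 b : ℝ) (hq : 0 < q) (hq1 : q ≠ 1)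
    (t1 t2 t3 : ℂ) (ht1 : t1 ≠ 0) (ht2 : t2 ≠ 0) (ht3 : t3 ≠ 0) (μ : ℝ) :
    ∀ x : ℝ, 0 < x →
      A3 q h1 h2 h3 l1 l2 l3 b t1 t2 t3 (fun y : ℝ => ((y ^ μ : ℝ) : ℂ)) x
        = d3pp q μ * ((x ^ (μ + 2) : ℝ) : ℂ)
          + d3p q h1 h2 h3 l1 l2 l3 t1 t2 t3 μ * ((x ^ (μ + 1) : ℝ) : ℂ)
          + d3z q h1 h2 h3 l1 l2 l3 t1 t2 t3 μ * ((x ^ μ : ℝ) : ℂ)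
          + d3m q h1 h2 h3 l1 l2 l3 b t1 t2 t3 μ * ((x ^ (μ - 1) : ℝ) : ℂ) := by
  intro x hx
  have hD : ∀ a b c : ℝ, a = b + c → qp q a = qp q b * qp q c := by
    intro a b c h; rw [h, qp_add hq]
  have hD3 : ∀ a b c d : ℝ, a = b + (c + d) → qp q a = qp q b * (qp q c * qp q d) := by
    intro a b c d h; rw [h, qp_add hq, qp_add hq]
  have hD4 : ∀ a b c d e : ℝ, a = b + (c + (d + e)) →
      qp q a = qp q b * (qp q c * (qp q d * qp q e)) := by
    intro a b c d e h; rw [h, qp_add hq, qp_add hq, qp_add hq]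
  have dh1 : qp q h1 = qp q (h1 + 1/2) * qp q (-(1/2)) := hD _ _ _ (by ring)
  have dh2 : qp q h2 = qp q (h2 + 1/2) * qp q (-(1/2)) := hD _ _ _ (by ring)
  have dh3 : qp q h3 = qp q (h3 + 1/2) * qp q (-(1/2)) := hD _ _ _ (by ring)
  have dl1 : qp q l1 = qp q (l1 - 1/2) * qp q (1/2) := hD _ _ _ (by ring)
  have dl2 : qp q l2 = qp q (l2 - 1/2) * qp q (1/2) := hD _ _ _ (by ring)
  have dl3 : qp q l3 = qp q (l3 - 1/2) * qp q (1/2) := hD _ _ _ (by ring)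
  have dm1 : qp q (h1 + 1/2 - μ) = qp q (h1 + 1/2) * qp q (-μ) := hD _ _ _ (by ring)
  have dm2 : qp q (h2 + 1/2 - μ) = qp q (h2 + 1/2) * qp q (-μ) := hD _ _ _ (by ring)
  have dm3 : qp q (h3 + 1/2 - μ) = qp q (h3 + 1/2) * qp q (-μ) := hD _ _ _ (by ring)
  have dn1 : qp q (l1 - 1/2 + μ) = qp q (l1 - 1/2) * qp q μ := hD _ _ _ (by ring)
  have dn2 : qp q (l2 - 1/2 + μ) = qp q (l2 - 1/2) * qp q μ := hD _ _ _ (by ring)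
  have dn3 : qp q (l3 - 1/2 + μ) = qp q (l3 - 1/2) * qp q μ := hD _ _ _ (by ring)
  have dz12 : qp q (h1 + h2 + 1 - μ) = qp q (h1 + 1/2) * (qp q (h2 + 1/2) * qp q (-μ)) :=
    hD3 _ _ _ _ (by ring)
  have dz13 : qp q (h1 + h3 + 1 - μ) = qp q (h1 + 1/2) * (qp q (h3 + 1/2) * qp q (-μ)) :=
    hD3 _ _ _ _ (by ring)
  have dz23 : qp q (h2 + h3 + 1 - μ) = qp q (h2 + 1/2) * (qp q (h3 + 1/2) * qp q (-μ)) :=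
    hD3 _ _ _ _ (by ring)
  have dw12 : qp q (l1 + l2 - 1 + μ) = qp q (l1 - 1/2) * (qp q (l2 - 1/2) * qp q μ) :=
    hD3 _ _ _ _ (by ring)
  have dw13 : qp q (l1 + l3 - 1 + μ) = qp q (l1 - 1/2) * (qp q (l3 - 1/2) * qp q μ) :=
    hD3 _ _ _ _ (by ring)
  have dw23 : qp q (l2 + l3 - 1 + μ) = qp q (l2 - 1/2) * (qp q (l3 - 1/2) * qp q μ) :=
    hD3 _ _ _ _ (by ring)
  have dT : qp q (h1 + h2 + h3 + 3/2 - μ)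
      = qp q (h1 + 1/2) * (qp q (h2 + 1/2) * (qp q (h3 + 1/2) * qp q (-μ))) :=
    hD4 _ _ _ _ _ (by ring)
  have dU : qp q (l1 + l2 + l3 - 3/2 + μ)
      = qp q (l1 - 1/2) * (qp q (l2 - 1/2) * (qp q (l3 - 1/2) * qp q μ)) :=
    hD4 _ _ _ _ _ (by ring)
  have e1 : ((x / q) ^ μ : ℝ) = x ^ μ * q ^ (-μ) := by
    rw [Real.div_rpow hx.le hq.le, Real.rpow_neg hq.le, div_eq_mul_inv]
  have e2 : ((q * x) ^ μ : ℝ) = q ^ μ * x ^ μ := Real.mul_rpow hq.le hx.le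
  have e3 : (x : ℝ) ^ (μ + 2) = x ^ μ * x ^ (2 : ℕ) := by
    rw [Real.rpow_add hx, ← Real.rpow_natCast x 2]; norm_num
  have e4 : (x : ℝ) ^ (μ + 1) = x ^ μ * x := Real.rpow_add_one hx.ne' μ
  have e5 : (x : ℝ) ^ (μ - 1) = x ^ μ * x⁻¹ := by
    rw [Real.rpow_sub_one hx.ne' μ, div_eq_mul_inv]
  have hqM : ((q ^ μ : ℝ) : ℂ) = qp q μ := rfl
  have hqN : ((q ^ (-μ) : ℝ) : ℂ) = qp q (-μ) := rfl
  have hx0 : (x : ℂ) ≠ 0 := Complex.ofReal_ne_zero.mpr hx.ne'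
  simp only [A3, d3pp, d3p, d3z, d3m, e1, e2, e3, e4, e5, Complex.ofReal_mul,
    Complex.ofReal_inv, Complex.ofReal_pow, hqM, hqN, dh1, dh2, dh3, dl1, dl2, dl3,
    dm1, dm2, dm3, dn1, dn2, dn3, dz12, dz13, dz23, dw12, dw13, dw23, dT, dU]
  field_simp
  ring
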